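/- Under conditional independence of Y and S given X and positivity, the inverse-probability-weighted estimator ψ̂ = [Σᵢ 1{Sᵢ=1} o(Xᵢ) (Yᵢ − g(Xᵢ))²] / [Σᵢ 1{Sᵢ=0}] with true weights o(X) = P(S=0 | X)/P(S=1 | X), computed from n i.i.d. copies of (X, S, SY), converges almost surely to the target-population MSE E[(Y − g(X))² | S=0] as n → ∞. -/

import Mathlib

open MeasureTheory ProbabilityTheory Filter
open scoped ENNReal Topology

section aux
variable {α β Ω' : Type*} {mα : MeasurableSpace α} {mβ : MeasurableSpace β}
  [MeasurableSpace Ω'] [StandardBorelSpace Ω'] [Nonempty Ω']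

example : StandardBorelSpace Bool := by infer_instance

lemma aux_map_compProd (m : Measure α) [IsFiniteMeasure m] {X : α → β} {Y : α → Ω'}
    (hX : Measurable X) (hY : Measurable Y) :
    m.map (fun a => (X a, Y a)) = (m.map X) ⊗ₘ condDistrib Y X m := by
  rw [condDistrib, ← Measure.fst_map_prodMk₀ (X := X) hY.aemeasurable,
    Measure.disintegrate]

lemma aux_lintegral_condDistrib (m : Measure α) [IsFiniteMeasure m] {X : α → β} {Y : α → Ω'}
    (hX : Measurable X) (hY : Measurable Y) {f : β × Ω' → ℝ≥0∞} (hf : Measurable f) :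
    ∫⁻ a, f (X a, Y a) ∂m = ∫⁻ x, ∫⁻ y, f (x, y) ∂(condDistrib Y X m x) ∂(m.map X) := by
  rw [← lintegral_map hf (hX.prodMk hY), aux_map_compProd m hX hY,
    Measure.lintegral_compProd hf]

lemma aux_cond_lintegral (m : Measure α) [IsFiniteMeasure m] {A : Set α} (hA : m A ≠ 0)
    (h : α → ℝ≥0∞) : ∫⁻ a in A, h a ∂m = m A * ∫⁻ a, h a ∂(m[|A]) := by
  rw [ProbabilityTheory.cond, lintegral_smul_measure, smul_eq_mul, ← mul_assoc,
    ENNReal.mul_inv_cancel hA (measure_ne_top m A), one_mul]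

end aux

section aux2
variable {α β : Type*} {mα : MeasurableSpace α} {mβ : MeasurableSpace β}

lemma aux_set_lintegral_bool (m : Measure α) [IsFiniteMeasure m] {X : α → β} {S : α → Bool}
    (hX : Measurable X) (hS : Measurable S) (s : Bool) {f : β → ℝ≥0∞} (hf : Measurable f) :
    ∫⁻ a in {a | S a = s}, f (X a) ∂m
      = ∫⁻ x, condDistrib S X m x {s} * f x ∂(m.map X) := by
  have hF : Measurable (fun p : β × Bool => if p.2 = s then f p.1 else 0) := by
    refine Measurable.ite ?_ (hf.comp measurable_fst) measurable_const
    exact measurable_snd (measurableSet_singleton s)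
  have h1 := aux_lintegral_condDistrib m hX hS hF
  have hLHS : ∫⁻ a, (if S a = s then f (X a) else 0) ∂m
      = ∫⁻ a in {a | S a = s}, f (X a) ∂m := by
    have hset : MeasurableSet {a : α | S a = s} := hS (measurableSet_singleton s)
    rw [← lintegral_indicator hset]
    congr 1; ext a; simp [Set.indicator_apply, Set.mem_setOf_eq]
  have hIN : ∀ x : β, ∫⁻ b, (if b = s then f x else 0) ∂(condDistrib S X m x)
      = condDistrib S X m x {s} * f x := by
    intro x
    have : (fun b => if b = s then f x else 0)
        = ({s} : Set Bool).indicator (fun _ => f x) := by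
      ext b; simp [Set.indicator_apply]
    rw [this, lintegral_indicator (measurableSet_singleton s), setLIntegral_const, mul_comm]
  rw [← hLHS, h1]
  simp_rw [hIN]

lemma aux_density (m : Measure α) [IsFiniteMeasure m] {X : α → β} {S : α → Bool}
    (hX : Measurable X) (hS : Measurable S) (s : Bool) (hs : m {a | S a = s} ≠ 0)
    {f : β → ℝ≥0∞} (hf : Measurable f) :
    m {a | S a = s} * ∫⁻ x, f x ∂((m[|{a | S a = s}]).map X)
      = ∫⁻ x, condDistrib S X m x {s} * f x ∂(m.map X) := by
  rw [lintegral_map hf hX, ← aux_cond_lintegral m hs, aux_set_lintegral_bool m hX hS s hf]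

lemma aux_ratio {A B : ℕ → ℝ} {a b : ℝ} (hb : b ≠ 0)
    (hA : Tendsto (fun n => A n / n) atTop (𝓝 a))
    (hB : Tendsto (fun n => B n / n) atTop (𝓝 b)) :
    Tendsto (fun n => A n / B n) atTop (𝓝 (a / b)) := by
  refine (hA.div hB hb).congr' ?_
  filter_upwards [eventually_ge_atTop 1] with n hn
  have hn' : (n : ℝ) ≠ 0 := by
    have : 0 < n := hn
    positivity
  simp only [Pi.div_apply]
  rw [div_div_div_comm, div_self hn', div_one]

lemma aux_slln {Ω E : Type*} [MeasurableSpace Ω] [MeasurableSpace E]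
    (μ : Measure Ω) [IsProbabilityMeasure μ] (m : Measure E) [IsProbabilityMeasure m]
    (W : ℕ → Ω → E) (hWmeas : ∀ i, Measurable (W i))
    (hindep : iIndepFun W μ)
    (hident : ∀ i, μ.map (W i) = m)
    {f : E → ℝ} (hf : Measurable f) (hint : Integrable f m) :
    ∀ᵐ ω ∂μ, Tendsto (fun n => (∑ i ∈ Finset.range n, f (W i ω)) / n) atTop
      (𝓝 (∫ x, f x ∂m)) := by
  have h0 : Integrable (fun ω => f (W 0 ω)) μ := by
    rw [← hident 0] at hint
    exact (integrable_map_measure hf.aestronglyMeasurable (hWmeas 0).aemeasurable).mp hint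
  have hval : ∫ ω, f (W 0 ω) ∂μ = ∫ x, f x ∂m := by
    rw [← hident 0, integral_map (hWmeas 0).aemeasurable hf.aestronglyMeasurable]
  have := strong_law_ae_real (fun i ω => f (W i ω)) h0
    (fun i j hij => ((hindep.indepFun hij).comp hf hf))
    (fun i => IdentDistrib.comp
      ⟨(hWmeas i).aemeasurable, (hWmeas 0).aemeasurable, by rw [hident i, hident 0]⟩ hf)
  rw [hval] at this
  exact this
end aux2

section aux3
variable {α β : Type*} {mα : MeasurableSpace α} {mβ : MeasurableSpace β}

lemma aux_density_set (m : Measure α) [IsFiniteMeasure m] {X : α → β} {S : α → Bool}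
    (hX : Measurable X) (hS : Measurable S) (s : Bool) (hs : m {a | S a = s} ≠ 0)
    {A : Set β} (hA : MeasurableSet A) :
    m {a | S a = s} * (m[|{a | S a = s}]).map X A
      = ∫⁻ x in A, condDistrib S X m x {s} ∂(m.map X) := by
  have hd := aux_density m hX hS s hs (f := A.indicator fun _ => (1 : ℝ≥0∞))
    (measurable_const.indicator hA)
  rw [lintegral_indicator hA, setLIntegral_one] at hd
  rw [hd, ← lintegral_indicator hA]
  congr 1; ext x; by_cases hx : x ∈ A <;> simp [hx]

end aux3

/-- Under conditional independence of `Y` and `S` given `X` and positivity, the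
inverse-probability-weighted estimator
`ψ̂ₙ = [Σᵢ 1{Sᵢ=1} o(Xᵢ) (Yᵢ − g(Xᵢ))²] / [Σᵢ 1{Sᵢ=0}]`, with true weights
`o(X) = P(S=0|X)/P(S=1|X)`, computed from `n` i.i.d. copies of `(X, S, Y)`, converges
almost surely to the target-population MSE `E[(Y − g(X))² | S=0]` as `n → ∞`.
Here `(ν, X, S, Y)` describes the population, and `W i = (Xᵢ, Sᵢ, Yᵢ)` are the i.i.d.
copies defined on a probability space `(Ω, μ)`. -/
theorem stmt_8 {Θ Ω : Type*} [MeasurableSpace Θ] [MeasurableSpace Ω] {d : ℕ}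
    (ν : Measure Θ) [IsProbabilityMeasure ν]
    (μ : Measure Ω) [IsProbabilityMeasure μ]
    (Y : Θ → ℝ) (X : Θ → (Fin d → ℝ)) (S : Θ → Bool)
    (g : (Fin d → ℝ) → ℝ)
    (hY : Measurable Y) (hX : Measurable X) (hS : Measurable S) (hg : Measurable g)
    (hs1 : ν {θ | S θ = true} ≠ 0) (hs0 : ν {θ | S θ = false} ≠ 0)
    (hpos : ∀ᵐ x ∂((ν[|{θ | S θ = false}]).map X),
      0 < condDistrib S X ν x {true})
    (hcondDist : ∀ᵐ x ∂((ν[|{θ | S θ = false}]).map X),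
      condDistrib Y X (ν[|{θ | S θ = true}]) x
        = condDistrib Y X (ν[|{θ | S θ = false}]) x)
    -- the weighted loss has finite mean
    (hWint : Integrable (fun θ =>
      if S θ = true then
        ((condDistrib S X ν (X θ) {false}).toReal
            / (condDistrib S X ν (X θ) {true}).toReal) * (Y θ - g (X θ)) ^ 2
      else 0) ν)
    -- i.i.d. copies of (X, S, Y)
    (W : ℕ → Ω → ((Fin d → ℝ) × Bool × ℝ))
    (hWmeas : ∀ i, Measurable (W i))
    (hindep : iIndepFun W μ)
    (hident : ∀ i, μ.map (W i) = ν.map (fun θ => (X θ, S θ, Y θ))) :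
    ∀ᵐ ω ∂μ, Tendsto (fun n =>
        (∑ i ∈ Finset.range n,
            if (W i ω).2.1 = true then
              ((condDistrib S X ν ((W i ω).1) {false}).toReal
                  / (condDistrib S X ν ((W i ω).1) {true}).toReal)
                * ((W i ω).2.2 - g ((W i ω).1)) ^ 2
            else 0)
          / (∑ i ∈ Finset.range n, if (W i ω).2.1 = false then (1 : ℝ) else 0))
      atTop (nhds (∫ θ, (Y θ - g (X θ)) ^ 2 ∂(ν[|{θ | S θ = false}]))) := by
  classical
  have hAt : MeasurableSet {θ | S θ = true} := hS (measurableSet_singleton true)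
  have hAf : MeasurableSet {θ | S θ = false} := hS (measurableSet_singleton false)
  haveI h1P : IsProbabilityMeasure (ν[|{θ | S θ = true}]) := cond_isProbabilityMeasure hs1
  haveI h0P : IsProbabilityMeasure (ν[|{θ | S θ = false}]) := cond_isProbabilityMeasure hs0
  set κ := condDistrib S X ν with hκ
  set o : (Fin d → ℝ) → ℝ := fun x => (κ x {false}).toReal / (κ x {true}).toReal with ho
  have hκt : Measurable fun x => κ x {true} := Kernel.measurable_coe κ (measurableSet_singleton true)
  have hκf : Measurable fun x => κ x {false} :=
    Kernel.measurable_coe κ (measurableSet_singleton false)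
  have homeas : Measurable o := hκf.ennreal_toReal.div hκt.ennreal_toReal
  have honneg : ∀ x, 0 ≤ o x := fun x => div_nonneg ENNReal.toReal_nonneg ENNReal.toReal_nonneg
  set f1 : (Fin d → ℝ) × Bool × ℝ → ℝ :=
    fun w => if w.2.1 = true then o w.1 * (w.2.2 - g w.1) ^ 2 else 0 with hf1def
  set f0 : (Fin d → ℝ) × Bool × ℝ → ℝ := fun w => if w.2.1 = false then 1 else 0 with hf0def
  have hw21 : Measurable fun w : (Fin d → ℝ) × Bool × ℝ => w.2.1 :=
    measurable_fst.comp measurable_snd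
  have hf1meas : Measurable f1 := by
    refine Measurable.ite (hw21 (measurableSet_singleton true)) ?_ measurable_const
    exact (homeas.comp measurable_fst).mul
      (((measurable_snd.comp measurable_snd).sub (hg.comp measurable_fst)).pow_const 2)
  have hf0meas : Measurable f0 :=
    Measurable.ite (hw21 (measurableSet_singleton false)) measurable_const measurable_const
  have hTmeas : Measurable fun θ => (X θ, S θ, Y θ) := hX.prodMk (hS.prodMk hY)
  set m := ν.map (fun θ => (X θ, S θ, Y θ)) with hm
  haveI : IsProbabilityMeasure m := Measure.isProbabilityMeasure_map hTmeas.aemeasurable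
  -- integrability of f1, f0 w.r.t. m
  have hint1 : Integrable f1 m := by
    rw [hm, integrable_map_measure hf1meas.aestronglyMeasurable hTmeas.aemeasurable]
    exact hWint
  have hint0 : Integrable f0 m := by
    refine (integrable_const (1 : ℝ)).mono' hf0meas.aestronglyMeasurable (ae_of_all _ fun w => ?_)
    rw [hf0def]; dsimp only
    split <;> simp
  -- SLLN
  have hS1 := aux_slln μ m W hWmeas hindep hident hf1meas hint1
  have hS0 := aux_slln μ m W hWmeas hindep hident hf0meas hint0
  -- value of denominators
  have hI0 : ∫ x, f0 x ∂m = (ν {θ | S θ = false}).toReal := by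
    rw [hm, integral_map hTmeas.aemeasurable hf0meas.aestronglyMeasurable]
    have hind : (fun θ => f0 (X θ, S θ, Y θ))
        = Set.indicator {θ | S θ = false} (fun _ => (1 : ℝ)) := by
      ext θ; simp only [hf0def]
      by_cases h : S θ = false <;> simp [h, Set.indicator_apply, Set.mem_setOf_eq]
    rw [hind, integral_indicator_const _ hAf, smul_eq_mul, mul_one]
    rfl
  have hb0 : (ν {θ | S θ = false}).toReal ≠ 0 :=
    ENNReal.toReal_ne_zero.mpr ⟨hs0, measure_ne_top _ _⟩
  -- key identity
  have hkey : (∫ x, f1 x ∂m) / (ν {θ | S θ = false}).toReal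
      = ∫ θ, (Y θ - g (X θ)) ^ 2 ∂(ν[|{θ | S θ = false}]) := by
    set q : (Fin d → ℝ) × ℝ → ℝ≥0∞ := fun p => ENNReal.ofReal ((p.2 - g p.1) ^ 2) with hqdef
    have hqmeas : Measurable q :=
      ((measurable_snd.sub (hg.comp measurable_fst)).pow_const 2).ennreal_ofReal
    set η1 := condDistrib Y X (ν[|{θ | S θ = true}]) with hη1
    set η0 := condDistrib Y X (ν[|{θ | S θ = false}]) with hη0
    set G1 : (Fin d → ℝ) → ℝ≥0∞ := fun x => ∫⁻ y, q (x, y) ∂(η1 x) with hG1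
    set G0 : (Fin d → ℝ) → ℝ≥0∞ := fun x => ∫⁻ y, q (x, y) ∂(η0 x) with hG0
    have hG1meas : Measurable G1 := Measurable.lintegral_kernel_prod_right hqmeas
    have hG0meas : Measurable G0 := Measurable.lintegral_kernel_prod_right hqmeas
    set o' : (Fin d → ℝ) → ℝ≥0∞ := fun x => ENNReal.ofReal (o x) with ho'
    have ho'meas : Measurable o' := homeas.ennreal_ofReal
    set J := ∫⁻ θ, q (X θ, Y θ) ∂(ν[|{θ | S θ = false}]) with hJ
    have e1 : ∫⁻ θ, ENNReal.ofReal (f1 (X θ, S θ, Y θ)) ∂ν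
        = ∫⁻ θ in {θ | S θ = true}, o' (X θ) * q (X θ, Y θ) ∂ν := by
      rw [← lintegral_indicator hAt]
      congr 1; ext θ
      simp only [hf1def]
      by_cases h : S θ = true
      · simp only [h, if_true, Set.indicator_apply, Set.mem_setOf_eq]
        rw [ENNReal.ofReal_mul (honneg _)]
      · simp [h]
    have e2 : ∫⁻ θ in {θ | S θ = true}, o' (X θ) * q (X θ, Y θ) ∂ν
        = ν {θ | S θ = true} * ∫⁻ θ, o' (X θ) * q (X θ, Y θ) ∂(ν[|{θ | S θ = true}]) :=
      aux_cond_lintegral ν hs1 _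
    have hoq : Measurable fun p : (Fin d → ℝ) × ℝ => o' p.1 * q p :=
      (ho'meas.comp measurable_fst).mul hqmeas
    have e3 : ∫⁻ θ, o' (X θ) * q (X θ, Y θ) ∂(ν[|{θ | S θ = true}])
        = ∫⁻ x, o' x * G1 x ∂((ν[|{θ | S θ = true}]).map X) :=
      calc ∫⁻ θ, o' (X θ) * q (X θ, Y θ) ∂(ν[|{θ | S θ = true}])
          = ∫⁻ x, ∫⁻ y, o' x * q (x, y) ∂(η1 x) ∂((ν[|{θ | S θ = true}]).map X) :=
            aux_lintegral_condDistrib _ hX hY hoq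
        _ = ∫⁻ x, o' x * G1 x ∂((ν[|{θ | S θ = true}]).map X) :=
            lintegral_congr fun x =>
              lintegral_const_mul (o' x) (hqmeas.comp measurable_prodMk_left)
    have e4 : ν {θ | S θ = true} * ∫⁻ x, o' x * G1 x ∂((ν[|{θ | S θ = true}]).map X)
        = ∫⁻ x, κ x {true} * (o' x * G1 x) ∂(ν.map X) :=
      aux_density ν hX hS true hs1 (ho'meas.mul hG1meas)
    have hNull : ∀ᵐ x ∂(ν.map X), κ x {true} = 0 → κ x {false} = 0 := by
      have hNmeas : MeasurableSet {x | κ x {true} = 0} := hκt (measurableSet_singleton 0)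
      have hμ0N : ((ν[|{θ | S θ = false}]).map X) {x | κ x {true} = 0} = 0 := by
        have h := ae_iff.mp hpos
        convert h using 2
        ext x; simp [pos_iff_ne_zero]
      have h2 : ∫⁻ x in {x | κ x {true} = 0}, κ x {false} ∂(ν.map X) = 0 := by
        rw [← aux_density_set ν hX hS false hs0 hNmeas, hμ0N, mul_zero]
      rw [lintegral_eq_zero_iff hκf] at h2
      have h4 := (ae_restrict_iff' hNmeas).mp h2
      filter_upwards [h4] with x hx h
      simpa using hx h
    have e5 : ∫⁻ x, κ x {true} * (o' x * G1 x) ∂(ν.map X)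
        = ∫⁻ x, κ x {false} * G1 x ∂(ν.map X) := by
      refine lintegral_congr_ae ?_
      filter_upwards [hNull] with x hx
      by_cases h : κ x {true} = 0
      · rw [h, hx h, zero_mul, zero_mul]
      · have ho'x : o' x = κ x {false} / κ x {true} := by
          show ENNReal.ofReal ((κ x {false}).toReal / (κ x {true}).toReal) = _
          rw [← ENNReal.toReal_div,
            ENNReal.ofReal_toReal (ENNReal.div_lt_top (measure_ne_top _ _) h).ne]
        rw [ho'x, ← mul_assoc, ENNReal.mul_div_cancel h (measure_ne_top _ _)]
    have e6 : ∫⁻ x, κ x {false} * G1 x ∂(ν.map X)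
        = ∫⁻ x, κ x {false} * G0 x ∂(ν.map X) := by
      have hwdeq : (ν.map X).withDensity (fun x => κ x {false})
          = ν {θ | S θ = false} • ((ν[|{θ | S θ = false}]).map X) := by
        ext A hA
        rw [withDensity_apply _ hA, Measure.smul_apply, smul_eq_mul,
          aux_density_set ν hX hS false hs0 hA]
      have habs : (ν.map X).withDensity (fun x => κ x {false})
          ≪ ((ν[|{θ | S θ = false}]).map X) := by
        refine Measure.AbsolutelyContinuous.mk fun A hA h0 => ?_
        rw [hwdeq, Measure.smul_apply, smul_eq_mul, h0, mul_zero]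
      have hG : ∀ᵐ x ∂(ν.map X).withDensity (fun x => κ x {false}), G1 x = G0 x := by
        refine (hcondDist.mono fun x hx => ?_).filter_mono habs.ae_le
        show (∫⁻ y, q (x, y) ∂(η1 x)) = ∫⁻ y, q (x, y) ∂(η0 x)
        rw [hx]
      calc ∫⁻ x, κ x {false} * G1 x ∂(ν.map X)
          = ∫⁻ x, G1 x ∂((ν.map X).withDensity fun x => κ x {false}) :=
            (lintegral_withDensity_eq_lintegral_mul _ hκf hG1meas).symm
        _ = ∫⁻ x, G0 x ∂((ν.map X).withDensity fun x => κ x {false}) := lintegral_congr_ae hG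
        _ = ∫⁻ x, κ x {false} * G0 x ∂(ν.map X) :=
            lintegral_withDensity_eq_lintegral_mul _ hκf hG0meas
    have e8 : ∫⁻ x, κ x {false} * G0 x ∂(ν.map X) = ν {θ | S θ = false} * J := by
      rw [← aux_density ν hX hS false hs0 hG0meas]
      congr 1
      rw [hJ]
      exact (aux_lintegral_condDistrib _ hX hY hqmeas).symm
    have hL : ∫⁻ θ, ENNReal.ofReal (f1 (X θ, S θ, Y θ)) ∂ν = ν {θ | S θ = false} * J := by
      rw [e1, e2, e3, e4, e5, e6, e8]
    have hLfin : ν {θ | S θ = false} * J ≠ ∞ := by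
      rw [← hL]
      exact hWint.lintegral_lt_top.ne
    have hJfin : J ≠ ∞ := by
      intro hJi
      rw [hJi, ENNReal.mul_top hs0] at hLfin
      exact hLfin rfl
    have hf1nonneg : ∀ θ, 0 ≤ f1 (X θ, S θ, Y θ) := by
      intro θ
      simp only [hf1def]
      split
      · exact mul_nonneg (honneg _) (sq_nonneg _)
      · exact le_refl 0
    have hIf1 : ∫ x, f1 x ∂m = ((ν {θ | S θ = false}) * J).toReal := by
      rw [hm, integral_map hTmeas.aemeasurable hf1meas.aestronglyMeasurable,
        integral_eq_lintegral_of_nonneg_ae (ae_of_all _ hf1nonneg)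
          (hf1meas.comp hTmeas).aestronglyMeasurable, hL]
    have htarget : ∫ θ, (Y θ - g (X θ)) ^ 2 ∂(ν[|{θ | S θ = false}]) = J.toReal := by
      rw [integral_eq_lintegral_of_nonneg_ae (ae_of_all _ fun θ => sq_nonneg _)
        (show Measurable fun θ => (Y θ - g (X θ)) ^ 2 from
          (hY.sub (hg.comp hX)).pow_const 2).aestronglyMeasurable]
    rw [hIf1, htarget, ENNReal.toReal_mul, mul_comm, mul_div_assoc, div_self hb0, mul_one]
  -- conclusion
  filter_upwards [hS1, hS0] with ω h1 h0
  have hfin := aux_ratio (hI0 ▸ hb0) h1 h0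
  rw [hI0, hkey] at hfin
  simp only [hf1def, hf0def, ho] at hfin
  exact hfin
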